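/- Let A, B, C be additive abelian groups, let p : B → A and I : A → C be additive group homomorphisms with ker I = range p, let τ : A → ℝ be an additive group homomorphism, and let M be a subgroup of ℝ. Then the following are equivalent: (i) there exists a subgroup G of A such that τ(G) ⊆ M and I(A)/I(G) is torsion (for every a ∈ A there exist a positive integer r and g ∈ G with r·I(a) = I(g)); (ii) the ℚ-subspaces of ℝ spanned by (range of τ) + M and by (range of τ∘p) + M coincide. -/

import Mathlib

/-- Algebraic core of the characterization of `M`-measured 2-asymptotic factors:
with `ker I = range p`, the state `τ` is `M`-measured (there is a subgroup
`G ⊆ τ⁻¹(M)` with `I(A)/I(G)` torsion) iff the `ℚ`-spans of `range τ + M` and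
`range (τ ∘ p) + M` coincide. -/
theorem stmt_16 {A B C : Type*} [AddCommGroup A] [AddCommGroup B] [AddCommGroup C]
    (p : B →+ A) (I : A →+ C) (τ : A →+ ℝ)
    (hker : ∀ a : A, I a = 0 ↔ ∃ b : B, p b = a)
    (M : AddSubgroup ℝ) :
    (∃ G : AddSubgroup A, (∀ g ∈ G, τ g ∈ M) ∧
        ∀ a : A, ∃ r : ℕ, 0 < r ∧ ∃ g ∈ G, r • I a = I g) ↔
    (Submodule.span ℚ (Set.range ⇑τ ∪ (M : Set ℝ)) =
      Submodule.span ℚ (Set.range (⇑τ ∘ ⇑p) ∪ (M : Set ℝ))) := by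
  constructor
  · rintro ⟨G, hGM, hGt⟩
    apply le_antisymm
    · rw [Submodule.span_le]
      rintro x (⟨a, rfl⟩ | hx)
      · obtain ⟨r, hr, g, hg, hrg⟩ := hGt a
        have hI : I (r • a - g) = 0 := by
          rw [map_sub, map_nsmul, hrg, sub_self]
        obtain ⟨b, hb⟩ := (hker _).mp hI
        have hτ : (r : ℝ) * τ a = τ (p b) + τ g := by
          have := congrArg τ hb
          rw [map_sub, map_nsmul, nsmul_eq_mul] at this
          linarith
        have h1 : τ (p b) ∈ Submodule.span ℚ (Set.range (⇑τ ∘ ⇑p) ∪ (M : Set ℝ)) :=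
          Submodule.subset_span (Or.inl ⟨b, rfl⟩)
        have h2 : τ g ∈ Submodule.span ℚ (Set.range (⇑τ ∘ ⇑p) ∪ (M : Set ℝ)) :=
          Submodule.subset_span (Or.inr (hGM g hg))
        have hr0 : (r : ℝ) ≠ 0 := Nat.cast_ne_zero.mpr hr.ne'
        have : τ a = ((r : ℚ)⁻¹ : ℚ) • (τ (p b) + τ g) := by
          rw [Rat.smul_def]
          push_cast
          field_simp
          linarith
        rw [this]
        exact Submodule.smul_mem _ _ (Submodule.add_mem _ h1 h2)
      · exact Submodule.subset_span (Or.inr hx)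
    · apply Submodule.span_mono
      rintro x (⟨b, rfl⟩ | hx)
      · exact Or.inl ⟨p b, rfl⟩
      · exact Or.inr hx
  · intro h
    refine ⟨AddSubgroup.comap τ M, fun g hg => hg, fun a => ?_⟩
    have ha : τ a ∈ Submodule.span ℚ (Set.range (⇑τ ∘ ⇑p) ∪ (M : Set ℝ)) := by
      rw [← h]; exact Submodule.subset_span (Or.inl ⟨a, rfl⟩)
    have key : ∀ x ∈ Submodule.span ℚ (Set.range (⇑τ ∘ ⇑p) ∪ (M : Set ℝ)),
        ∃ n : ℕ, 0 < n ∧ ∃ b : B, ∃ m ∈ M, (n : ℝ) * x = τ (p b) + m := by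
      intro x hx
      induction hx using Submodule.span_induction with
      | mem x hx =>
        rcases hx with ⟨b, rfl⟩ | hm
        · exact ⟨1, one_pos, b, 0, M.zero_mem, by simp⟩
        · exact ⟨1, one_pos, 0, x, hm, by simp⟩
      | zero => exact ⟨1, one_pos, 0, 0, M.zero_mem, by simp⟩
      | add x y hx hy ihx ihy =>
        obtain ⟨n1, h1, b1, m1, hm1, e1⟩ := ihx
        obtain ⟨n2, h2, b2, m2, hm2, e2⟩ := ihy
        refine ⟨n1 * n2, Nat.mul_pos h1 h2, n2 • b1 + n1 • b2, n2 • m1 + n1 • m2,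
          M.add_mem (M.nsmul_mem hm1 n2) (M.nsmul_mem hm2 n1), ?_⟩
        rw [map_add, map_add, map_nsmul, map_nsmul, map_nsmul, map_nsmul]
        push_cast
        simp only [nsmul_eq_mul]
        nlinarith [e1, e2]
      | smul q x hx ih =>
        obtain ⟨n, hn, b, m, hm, e⟩ := ih
        refine ⟨n * q.den, Nat.mul_pos hn q.pos, q.num • b, q.num • m,
          M.zsmul_mem hm q.num, ?_⟩
        rw [map_zsmul, map_zsmul, Rat.smul_def, Rat.cast_def]
        have hd : (q.den : ℝ) ≠ 0 := Nat.cast_ne_zero.mpr q.den_nz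
        simp only [zsmul_eq_mul]
        push_cast
        field_simp
        linear_combination (q.num : ℝ) * e
    obtain ⟨n, hn, b, m, hm, e⟩ := key _ ha
    have hIp : I (p b) = 0 := (hker _).mpr ⟨b, rfl⟩
    refine ⟨n, hn, n • a - p b, ?_, ?_⟩
    · show τ (n • a - p b) ∈ M
      have : τ (n • a - p b) = m := by
        rw [map_sub, map_nsmul, nsmul_eq_mul]
        linarith
      rw [this]; exact hm
    · rw [map_sub, map_nsmul, hIp, sub_zero]
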